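/- Let 0 < c and N be such that c/h(N) < 1, where h(N) = log N/log log N. Let Z be a random walk started at 0 whose i.i.d. steps take value 1 with probability c/h(N) and 0 otherwise, and fix K ≥ 2 and η > 0. Define S = inf{m > 0 : Z_{mK} − m ≥ (η + (K−1)/K)·h(N) or Z_{mK} − m ≤ −K}. Then for every ε > 0 there exists N₀ such that for all N ≥ N₀, P(Z_{SK} − S ≥ (η + (K−1)/K)·h(N)) ≤ N^{−(1 + ηK/(K−1) − ε)}. -/

import Mathlib

set_option maxHeartbeats 1000000

open MeasureTheory ProbabilityTheory Finset Filter
open scoped ENNReal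

/-- `h x = log x / log log x`. -/
noncomputable def h (x : ℝ) : ℝ := Real.log x / Real.log (Real.log x)

section Aux

lemma aux_choose_le_two_pow (n k : ℕ) : n.choose k ≤ 2 ^ n := by
  rcases le_or_gt k n with hkn | hkn
  · calc n.choose k ≤ ∑ m ∈ Finset.range (n+1), n.choose m :=
        Finset.single_le_sum (fun i _ => Nat.zero_le _) (Finset.mem_range.2 (by omega))
      _ = 2 ^ n := Nat.sum_range_choose n
  · rw [Nat.choose_eq_zero_of_lt hkn]; exact Nat.zero_le _

variable {Ω : Type} [MeasurableSpace Ω] (P : Measure Ω) [IsProbabilityMeasure P]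

lemma aux_prod_ones (ξ : ℕ → Ω → ℕ)
    (hind : iIndepFun ξ P) (q : ℝ≥0∞)
    (hq : ∀ i, P {ω | ξ i ω = 1} = q) (T : Finset ℕ) :
    P (⋂ i ∈ T, {ω | ξ i ω = 1}) = q ^ T.card := by
  have : P (⋂ i ∈ T, {ω | ξ i ω = 1}) = ∏ i ∈ T, P {ω | ξ i ω = 1} := by
    refine hind.meas_biInter (fun i _ => ?_)
    exact ⟨{1}, MeasurableSet.singleton 1, rfl⟩
  rw [this]
  simp [hq, Finset.prod_const]

lemma aux_tail_bound (ξ : ℕ → Ω → ℕ)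
    (hind : iIndepFun ξ P) (q : ℝ≥0∞)
    (hq : ∀ i, P {ω | ξ i ω = 1} = q) (n k : ℕ) :
    P ({ω | k ≤ ∑ i ∈ range n, ξ i ω} ∩ {ω | ∀ i, ξ i ω ≤ 1})
      ≤ (n.choose k : ℝ≥0∞) * q ^ k := by
  have hsub : ({ω | k ≤ ∑ i ∈ range n, ξ i ω} ∩ {ω | ∀ i, ξ i ω ≤ 1}) ⊆
      ⋃ T ∈ (range n).powersetCard k, ⋂ i ∈ T, {ω | ξ i ω = 1} := by
    rintro ω ⟨h1, h2⟩
    have hsum : ∑ i ∈ range n, ξ i ω = ((range n).filter (fun i => ξ i ω = 1)).card := by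
      rw [Finset.card_filter]
      refine Finset.sum_congr rfl (fun i _ => ?_)
      rcases Nat.le_one_iff_eq_zero_or_eq_one.1 (h2 i) with hcase | hcase <;> simp [hcase]
    have hk : k ≤ ((range n).filter (fun i => ξ i ω = 1)).card := by
      rw [← hsum]; exact h1
    obtain ⟨T, hT, hcard⟩ := Finset.exists_subset_card_eq hk
    refine Set.mem_iUnion₂.2 ⟨T, ?_, ?_⟩
    · exact Finset.mem_powersetCard.2 ⟨hT.trans (Finset.filter_subset _ _), hcard⟩
    · exact Set.mem_iInter₂.2 fun i hi => (Finset.mem_filter.1 (hT hi)).2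
  calc P _ ≤ P (⋃ T ∈ (range n).powersetCard k, ⋂ i ∈ T, {ω | ξ i ω = 1}) :=
        measure_mono hsub
    _ ≤ ∑ T ∈ (range n).powersetCard k, P (⋂ i ∈ T, {ω | ξ i ω = 1}) :=
        measure_biUnion_finset_le _ _
    _ = ∑ T ∈ (range n).powersetCard k, q ^ k := by
        refine Finset.sum_congr rfl (fun T hT => ?_)
        rw [aux_prod_ones P ξ hind q hq T, (Finset.mem_powersetCard.1 hT).2]
    _ = (n.choose k : ℝ≥0∞) * q ^ k := by
        rw [Finset.sum_const, Finset.card_powersetCard, Finset.card_range, nsmul_eq_mul]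

lemma aux_good_ae (ξ : ℕ → Ω → ℕ) (hm : ∀ i, Measurable (ξ i)) (q : ℝ≥0∞) (hq1 : q ≤ 1)
    (hq : ∀ i, P {ω | ξ i ω = 1} = q ∧ P {ω | ξ i ω = 0} = 1 - q) :
    P {ω | ∀ i, ξ i ω ≤ 1}ᶜ = 0 := by
  have h2 : ∀ i, P {ω | 2 ≤ ξ i ω} = 0 := by
    intro i
    have hu : P ({ω | ξ i ω = 0} ∪ {ω | ξ i ω = 1}) = 1 := by
      have hd : Disjoint {ω | ξ i ω = 0} {ω | ξ i ω = 1} := by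
        rw [Set.disjoint_left]; intro ω h1 h2
        simp only [Set.mem_setOf_eq] at *; omega
      rw [measure_union hd ((hm i) (measurableSet_singleton 1)), (hq i).1, (hq i).2,
        tsub_add_cancel_of_le hq1]
    have hms : MeasurableSet ({ω | ξ i ω = 0} ∪ {ω | ξ i ω = 1}) :=
      ((hm i) (measurableSet_singleton 0)).union ((hm i) (measurableSet_singleton 1))
    have heq : {ω | 2 ≤ ξ i ω} = ({ω | ξ i ω = 0} ∪ {ω | ξ i ω = 1})ᶜ := by
      ext ω; simp only [Set.mem_compl_iff, Set.mem_union, Set.mem_setOf_eq]; omega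
    rw [heq, measure_compl hms (measure_ne_top _ _), hu, measure_univ, tsub_self]
  have hsub : {ω | ∀ i, ξ i ω ≤ 1}ᶜ ⊆ ⋃ i, {ω | 2 ≤ ξ i ω} := by
    intro ω hω
    simp only [Set.mem_compl_iff, Set.mem_setOf_eq, not_forall] at hω
    obtain ⟨i, hi⟩ := hω
    exact Set.mem_iUnion.2 ⟨i, by simp only [Set.mem_setOf_eq]; omega⟩
  refine le_antisymm ?_ zero_le
  calc P _ ≤ P (⋃ i, {ω | 2 ≤ ξ i ω}) := measure_mono hsub
    _ ≤ ∑' i, P {ω | 2 ≤ ξ i ω} := measure_iUnion_le _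
    _ = 0 := by simp [h2]

end Aux

lemma aux_real_ineqs (K : ℕ) (hK : 2 ≤ K) (c ε B H L LL : ℝ) (M n : ℕ)
    (hc : 0 < c) (hε : 0 < ε) (hB1 : 1 < B) (hεB : ε < B)
    (hLL : Real.log L = LL) (hH : H = L / LL)
    (hMl : 4 * B * H ≤ M) (hMu : (M : ℝ) ≤ 4 * B * H + 1)
    (hnl : B * H ≤ n) (hnu : (n : ℝ) ≤ B * H + 1)
    (h1 : 1 ≤ LL)
    (h2 : Real.log LL ≤ ε / (2 * B) * LL)
    (h3 : 2 * ((4 * B + 1) * (1 + K * Real.log 2) + (B + 1) * |Real.log c| + Real.log 2)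
        ≤ ε * LL)
    (h4 : 2 * ((K + 1 : ℝ) * Real.log 2 + |Real.log c| + 1) ≤ Real.log H)
    (h5 : Real.log 2 ≤ B * L)
    (h7 : 1 ≤ H) :
    (M : ℝ) * 2 ^ (M * K) * (c / H) ^ n ≤ 1 / 2 * Real.exp (-(B - ε) * L) ∧
    (2 ^ (K + 1) * (c / H)) ^ (M + 1) ≤ 1 / 2 * Real.exp (-(B - ε) * L) := by
  have hlog2 : 0 < Real.log 2 := Real.log_pos (by norm_num)
  have hB0 : 0 < B := by linarith
  have hLL0 : 0 < LL := by linarith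
  have hH0 : 0 < H := by linarith
  have hL : L = H * LL := by rw [hH, div_mul_cancel₀ _ (ne_of_gt hLL0)]
  have hL1 : 1 ≤ L := by nlinarith
  have hlogH : Real.log H = LL - Real.log LL := by
    rw [hH, Real.log_div (by nlinarith) (by positivity), hLL]
  have hθ : ε / (2 * B) < 1 / 2 := by
    rw [div_lt_div_iff₀ (by positivity) (by norm_num)]; nlinarith
  have hlogHge : (1 - ε / (2 * B)) * LL ≤ Real.log H := by
    rw [hlogH]; nlinarith [h2]
  have hlogH0 : 0 < Real.log H := by nlinarith [hlogHge, hθ, h1, hLL0]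
  have hM1 : (1 : ℝ) ≤ M := by nlinarith [hMl, hB1, h7]
  have hp0 : 0 < c / H := by positivity
  have habs : 0 ≤ |Real.log c| := abs_nonneg _
  have hKr : (2 : ℝ) ≤ K := by exact_mod_cast hK
  have key_aux : H * ((4*B+1)*(1+(K:ℝ)*Real.log 2) + (B+1)*|Real.log c| + Real.log 2)
      ≤ ε/2 * (H * LL) := by
    have hC : 0 ≤ (4*B+1)*(1+(K:ℝ)*Real.log 2) + (B+1)*|Real.log c| + Real.log 2 := by positivity
    nlinarith [h3, hH0, mul_le_mul_of_nonneg_left h3 (le_of_lt hH0)]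
  constructor
  · -- piece 1
    have hX0 : (0:ℝ) < (M : ℝ) * 2 ^ (M * K) * (c / H) ^ n := by positivity
    rw [show (1:ℝ)/2 * Real.exp (-(B-ε)*L) = Real.exp (-(B-ε)*L - Real.log 2) by
      rw [Real.exp_sub, Real.exp_log (by norm_num)]; ring]
    calc (M : ℝ) * 2 ^ (M * K) * (c / H) ^ n
        = Real.exp (Real.log ((M : ℝ) * 2 ^ (M * K) * (c / H) ^ n)) :=
          (Real.exp_log hX0).symm
      _ ≤ Real.exp (-(B-ε)*L - Real.log 2) := by
          apply Real.exp_le_exp.2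
          rw [Real.log_mul (by positivity) (by positivity),
            Real.log_mul (by positivity) (by positivity), Real.log_pow, Real.log_pow,
            Real.log_div (ne_of_gt hc) (ne_of_gt hH0)]
          have hlogM : Real.log M ≤ (M : ℝ) := Real.log_le_self (by positivity)
          have hnlogc : (n:ℝ) * Real.log c ≤ (B+1) * H * |Real.log c| := by
            rcases le_or_gt (Real.log c) 0 with hlc | hlc
            · have h0 : (n:ℝ) * Real.log c ≤ 0 := mul_nonpos_of_nonneg_of_nonpos (by positivity) hlc
              have h1' : 0 ≤ (B+1) * H * |Real.log c| := by positivity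
              linarith
            · have h1' : Real.log c = |Real.log c| := (abs_of_pos hlc).symm
              have hn' : (n:ℝ) ≤ (B+1)*H := by nlinarith [hnu, h7, hB0]
              rw [← h1']
              exact mul_le_mul_of_nonneg_right hn' (le_of_lt hlc)
          have hnlogH : B * H * ((1 - ε/(2*B)) * LL) ≤ (n:ℝ) * Real.log H :=
            mul_le_mul hnl hlogHge (by nlinarith [hθ, hLL0]) (by positivity)
          have hd : B*L - ε/2*L ≤ (n:ℝ) * Real.log H := by
            refine le_trans (le_of_eq ?_) hnlogH
            rw [hL]; field_simp
          have hMexp : (M:ℝ) + ((M*K : ℕ):ℝ) * Real.log 2 ≤ (4*B*H+1) * (1 + K * Real.log 2) := by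
            have heq2 : (M:ℝ) + ((M*K : ℕ):ℝ) * Real.log 2 = (M:ℝ) * (1 + K * Real.log 2) := by
              push_cast; ring
            rw [heq2]
            exact mul_le_mul_of_nonneg_right hMu (by positivity)
          have he : H*((4*B+1)*(1+(K:ℝ)*Real.log 2) + (B+1)*|Real.log c| + Real.log 2) ≤ ε/2 * L := by
            rw [hL]; exact key_aux
          have hf : (4*B*H+1)*(1+(K:ℝ)*Real.log 2) + (B+1)*H*|Real.log c| + Real.log 2
              ≤ H*((4*B+1)*(1+(K:ℝ)*Real.log 2) + (B+1)*|Real.log c| + Real.log 2) := by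
            nlinarith [mul_nonneg (sub_nonneg.2 h7) (show (0:ℝ) ≤ 1+(K:ℝ)*Real.log 2 by positivity),
              mul_nonneg (sub_nonneg.2 h7) (le_of_lt hlog2)]
          have hexp : (n:ℝ)*(Real.log c - Real.log H) = (n:ℝ)*Real.log c - (n:ℝ)*Real.log H := by
            ring
          linarith [hlogM, hnlogc, hd, hMexp, he, hf]
  · -- piece 2
    rw [show (1:ℝ)/2 * Real.exp (-(B-ε)*L) = Real.exp (-(B-ε)*L - Real.log 2) by
      rw [Real.exp_sub, Real.exp_log (by norm_num)]; ring]
    calc (2 ^ (K+1) * (c / H)) ^ (M + 1)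
        = Real.exp (Real.log ((2 ^ (K+1) * (c / H)) ^ (M + 1))) := (Real.exp_log (by positivity)).symm
      _ ≤ Real.exp (-(B-ε)*L - Real.log 2) := by
          apply Real.exp_le_exp.2
          rw [Real.log_pow, Real.log_mul (by positivity) (ne_of_gt hp0), Real.log_pow,
            Real.log_div (ne_of_gt hc) (ne_of_gt hH0)]
          push_cast
          have hfac : ((K:ℝ)+1) * Real.log 2 + (Real.log c - Real.log H) ≤ -(Real.log H / 2) := by
            have h0 : Real.log c ≤ |Real.log c| := le_abs_self _
            linarith [h4]
          have hM4 : 4 * B * H ≤ (M:ℝ) + 1 := by linarith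
          have hstep : ((M:ℝ)+1) * (((K:ℝ)+1) * Real.log 2 + (Real.log c - Real.log H))
              ≤ -(2 * B * H * Real.log H) := by
            calc ((M:ℝ)+1) * (((K:ℝ)+1) * Real.log 2 + (Real.log c - Real.log H))
                ≤ ((M:ℝ)+1) * (-(Real.log H / 2)) :=
                  mul_le_mul_of_nonneg_left hfac (by linarith)
              _ ≤ (4*B*H) * (-(Real.log H / 2)) := by
                  have hmm := mul_le_mul_of_nonneg_right hM4 (show (0:ℝ) ≤ Real.log H / 2 by linarith)
                  nlinarith [hmm]
              _ = -(2 * B * H * Real.log H) := by ring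
          have hg : (2*B - ε) * L ≤ 2*B*H*Real.log H := by
            have heq : (2*B-ε)*L = 2*B*H*((1-ε/(2*B))*LL) := by
              rw [hL]; field_simp
            rw [heq]
            exact mul_le_mul_of_nonneg_left hlogHge (by positivity)
          calc ((M:ℝ)+1) * (((K:ℝ)+1) * Real.log 2 + (Real.log c - Real.log H))
              ≤ -(2 * B * H * Real.log H) := hstep
            _ ≤ -(B-ε)*L - Real.log 2 := by linarith [hg, h5]

lemma aux_eventual_conds (K : ℕ) (c ε B : ℝ) (hε : 0 < ε) (hB1 : 1 < B) :
    ∀ᶠ N : ℕ in atTop,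
      1 ≤ Real.log (Real.log N) ∧
      Real.log (Real.log (Real.log N)) ≤ ε / (2*B) * Real.log (Real.log N) ∧
      2 * ((4*B+1)*(1+(K:ℝ)*Real.log 2) + (B+1)*|Real.log c| + Real.log 2)
        ≤ ε * Real.log (Real.log N) ∧
      2 * (((K:ℝ)+1)*Real.log 2 + |Real.log c| + 1) ≤ Real.log (h N) ∧
      Real.log 2 ≤ B * Real.log N ∧
      2^(K+2) * c ≤ h N ∧
      1 ≤ h N := by
  have hB0 : (0:ℝ) < B := by linarith
  have hL : Tendsto (fun N : ℕ => Real.log N) atTop atTop :=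
    Real.tendsto_log_atTop.comp tendsto_natCast_atTop_atTop
  have hLL : Tendsto (fun N : ℕ => Real.log (Real.log N)) atTop atTop :=
    Real.tendsto_log_atTop.comp hL
  have hH : Tendsto (fun N : ℕ => h N) atTop atTop := by
    have h1 : Tendsto (fun x : ℝ => Real.exp x / x) atTop atTop := by
      simpa using Real.tendsto_exp_div_pow_atTop 1
    refine (h1.comp hLL).congr' ?_
    filter_upwards [hL.eventually_ge_atTop 1] with N hN
    simp only [Function.comp_apply, h]
    rw [Real.exp_log (by linarith)]
  have hlogH : Tendsto (fun N : ℕ => Real.log (h N)) atTop atTop :=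
    Real.tendsto_log_atTop.comp hH
  have hθ : 0 < ε / (2*B) := by positivity
  have hdiv : Tendsto (fun N : ℕ => Real.log (Real.log (Real.log N)) / Real.log (Real.log N))
      atTop (nhds 0) := by
    have h0 : Tendsto (fun x : ℝ => Real.log x / x) atTop (nhds 0) := by
      simpa [Function.comp] using Real.isLittleO_log_id_atTop.tendsto_div_nhds_zero
    exact h0.comp hLL
  filter_upwards [hLL.eventually_ge_atTop 1,
    hdiv.eventually_le_const hθ,
    hLL.eventually_ge_atTop
      (2 * ((4*B+1)*(1+(K:ℝ)*Real.log 2) + (B+1)*|Real.log c| + Real.log 2) / ε),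
    hlogH.eventually_ge_atTop (2 * (((K:ℝ)+1)*Real.log 2 + |Real.log c| + 1)),
    hL.eventually_ge_atTop (Real.log 2 / B),
    hH.eventually_ge_atTop (2^(K+2) * c),
    hH.eventually_ge_atTop 1] with N e1 e2 e3 e4 e5 e6 e7
  have hLL0 : (0:ℝ) < Real.log (Real.log N) := by linarith
  refine ⟨e1, ?_, ?_, e4, ?_, e6, e7⟩
  · rw [div_le_iff₀ hLL0] at e2; linarith [e2]
  · rw [div_le_iff₀ hε] at e3; linarith [e3]
  · rw [div_le_iff₀ hB0] at e5; linarith [e5]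

/-- Let `Z` be a random walk whose i.i.d. steps are `1` with probability `c/h(N)` and
`0` otherwise, `K ≥ 2`, `η > 0`, and let
`S = inf{m > 0 : Z_{mK} - m ≥ (η+(K-1)/K)h(N) or Z_{mK} - m ≤ -K}`.  For every
`ε > 0` and all sufficiently large `N`,
`P(Z_{SK} - S ≥ (η+(K-1)/K)h(N)) ≤ N^(-(1+ηK/(K-1)-ε))`.  (The event below states
that the first exit happens through the upper boundary.) -/
theorem random_walk_exit_estimate (K : ℕ) (hK : 2 ≤ K) (c η : ℝ) (hc : 0 < c)
    (hη : 0 < η) :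
    ∀ ε > (0 : ℝ), ∃ N₀ : ℕ, ∀ N : ℕ, N₀ ≤ N → c / h N < 1 →
    ∀ (Ω : Type) [MeasurableSpace Ω] (P : Measure Ω) [IsProbabilityMeasure P]
      (ξ : ℕ → Ω → ℕ), (∀ i, Measurable (ξ i)) →
    iIndepFun ξ P →
    (∀ i, P {ω | ξ i ω = 1} = ENNReal.ofReal (c / h N) ∧
      P {ω | ξ i ω = 0} = 1 - ENNReal.ofReal (c / h N)) →
    P {ω | ∃ m : ℕ, 0 < m ∧
        (∀ l : ℕ, 0 < l → l < m →
          (-(K : ℝ) < (∑ i ∈ Finset.range (l * K), (ξ i ω : ℝ)) - l ∧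
            (∑ i ∈ Finset.range (l * K), (ξ i ω : ℝ)) - l < (η + ((K : ℝ) - 1) / K) * h N)) ∧
        (η + ((K : ℝ) - 1) / K) * h N ≤ (∑ i ∈ Finset.range (m * K), (ξ i ω : ℝ)) - m} ≤
      ENNReal.ofReal ((N : ℝ) ^ (-(1 + η * K / ((K : ℝ) - 1) - ε))) := by
  intro ε hε
  have hKr : (2:ℝ) ≤ (K:ℝ) := by exact_mod_cast hK
  have hK1 : (1:ℝ) ≤ (K:ℝ) - 1 := by linarith
  have hK0 : (0:ℝ) < (K:ℝ) := by linarith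
  set B : ℝ := 1 + η * K / ((K:ℝ) - 1) with hBdef
  set a : ℝ := η + ((K:ℝ) - 1) / K with hadef
  have hB1 : 1 < B := by
    have : 0 < η * K / ((K:ℝ) - 1) := by positivity
    simp only [hBdef]; linarith
  have ha0 : 0 < a := by
    have : 0 < ((K:ℝ) - 1) / K := by positivity
    simp only [hadef]; linarith
  rcases le_or_gt B ε with hεB | hεB
  · -- trivial case : exponent nonnegative
    refine ⟨1, fun N hN _ Ω _ P _ ξ _ _ _ => ?_⟩
    have hN1 : (1:ℝ) ≤ (N:ℝ) := by exact_mod_cast hN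
    have h1le : (1:ℝ) ≤ (N:ℝ) ^ (-(B - ε)) := by
      rw [show (1:ℝ) = (N:ℝ) ^ (0:ℝ) by rw [Real.rpow_zero]]
      exact Real.rpow_le_rpow_of_exponent_le hN1 (by linarith)
    calc P _ ≤ 1 := prob_le_one
      _ ≤ ENNReal.ofReal ((N : ℝ) ^ (-(1 + η * K / ((K : ℝ) - 1) - ε))) := by
        rw [show (1:ℝ≥0∞) = ENNReal.ofReal 1 by simp]
        exact ENNReal.ofReal_le_ofReal h1le
  -- main case
  obtain ⟨N₀, hN₀⟩ := eventually_atTop.1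
    ((aux_eventual_conds K c ε B hε hB1).and (eventually_ge_atTop 2))
  refine ⟨N₀, fun N hN hcH Ω _ P _ ξ hmeas hind hdist => ?_⟩
  obtain ⟨⟨e1, e2, e3, e4, e5, e6, e7⟩, hN2⟩ := hN₀ N hN
  set H : ℝ := h N with hHdef
  set L : ℝ := Real.log N with hLdef
  have hH1 : (1:ℝ) ≤ H := e7
  have hH0 : (0:ℝ) < H := by linarith
  set p : ℝ := c / H with hpdef
  have hp0 : 0 ≤ p := by positivity
  set q : ℝ≥0∞ := ENNReal.ofReal p with hqdef
  have hq1 : q ≤ 1 := ENNReal.ofReal_le_one.2 (le_of_lt hcH)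
  set n : ℕ := ⌈B * H⌉₊ with hndef
  set M : ℕ := ⌈4 * B * H⌉₊ with hMdef
  have hB0 : (0:ℝ) < B := by linarith
  -- the key real inequalities
  obtain ⟨I1, I2⟩ := aux_real_ineqs K hK c ε B H L (Real.log L) M n hc hε hB1 hεB rfl rfl
    (Nat.le_ceil _) (le_of_lt (Nat.ceil_lt_add_one (by positivity)))
    (Nat.le_ceil _) (le_of_lt (Nat.ceil_lt_add_one (by positivity)))
    e1 e2 e3 e4 e5 e7
  -- basic ENNReal facts
  have hqK : (2:ℝ≥0∞)^K * q ≤ 2⁻¹ := by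
    have hple : p ≤ ((2:ℝ)^(K+2))⁻¹ := by
      rw [hpdef, div_le_iff₀ hH0]
      rw [show ((2:ℝ)^(K+2))⁻¹ * H = H / 2^(K+2) by ring, le_div_iff₀ (by positivity)]
      calc c * 2^(K+2) = 2^(K+2) * c := by ring
        _ ≤ H := e6
    have h2K : (2:ℝ≥0∞)^K = ENNReal.ofReal ((2:ℝ)^K) := by
      rw [ENNReal.ofReal_pow (by norm_num)]
      norm_num
    calc (2:ℝ≥0∞)^K * q = ENNReal.ofReal ((2:ℝ)^K * p) := by
          rw [h2K, hqdef, ENNReal.ofReal_mul (by positivity)]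
      _ ≤ ENNReal.ofReal ((2:ℝ)^K * ((2:ℝ)^(K+2))⁻¹) :=
          ENNReal.ofReal_le_ofReal (mul_le_mul_of_nonneg_left hple (by positivity))
      _ = ENNReal.ofReal (1/4 : ℝ) := by
          congr 1
          rw [pow_add]
          field_simp
          norm_num
      _ ≤ 2⁻¹ := by
          rw [show ((2:ℝ≥0∞))⁻¹ = ENNReal.ofReal (1/2 : ℝ) by
            rw [ENNReal.ofReal_div_of_pos (by norm_num)]; norm_num]
          exact ENNReal.ofReal_le_ofReal (by norm_num)
  -- events
  set Good : Set Ω := {ω | ∀ i, ξ i ω ≤ 1} with hGooddef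
  set E : ℕ → Set Ω := fun m =>
    {ω | a * H ≤ (∑ i ∈ Finset.range (m * K), (ξ i ω : ℝ)) - m} with hEdef
  have hq_i : ∀ i, P {ω | ξ i ω = 1} = q := fun i => (hdist i).1
  -- step 0 : inclusion
  have step0 : {ω | ∃ m : ℕ, 0 < m ∧
        (∀ l : ℕ, 0 < l → l < m →
          (-(K : ℝ) < (∑ i ∈ Finset.range (l * K), (ξ i ω : ℝ)) - l ∧
            (∑ i ∈ Finset.range (l * K), (ξ i ω : ℝ)) - l < (η + ((K : ℝ) - 1) / K) * h N)) ∧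
        (η + ((K : ℝ) - 1) / K) * h N ≤ (∑ i ∈ Finset.range (m * K), (ξ i ω : ℝ)) - m}
      ⊆ (⋃ m : ℕ, (E (m+1) ∩ Good)) ∪ Goodᶜ := by
    intro ω hω
    by_cases hg : ω ∈ Good
    · left
      obtain ⟨m, hm0, _, hup⟩ := hω
      refine Set.mem_iUnion.2 ⟨m - 1, ?_, hg⟩
      have hmeq : m - 1 + 1 = m := by omega
      rw [hEdef]
      simp only [Set.mem_setOf_eq, hmeq]
      exact hup
    · right; exact hg
  -- deterministic inclusions
  have detfact : ∀ m : ℕ, ∀ ω, ω ∈ E (m+1) ∩ Good →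
      (m + 2 ≤ ∑ i ∈ range ((m+1) * K), ξ i ω ∧ n ≤ ∑ i ∈ range ((m+1) * K), ξ i ω) := by
    rintro m ω ⟨hup, hg⟩
    set s : ℕ := ∑ i ∈ range ((m+1) * K), ξ i ω with hsdef
    have hcast : (∑ i ∈ Finset.range ((m+1) * K), (ξ i ω : ℝ)) = (s:ℝ) := by
      rw [hsdef]; push_cast; rfl
    rw [hEdef] at hup
    simp only [Set.mem_setOf_eq, hcast] at hup
    push_cast at hup
    -- hup : a * H ≤ s - (m+1)
    have hsK : s ≤ (m+1) * K := by
      calc s ≤ ∑ _i ∈ range ((m+1) * K), 1 := Finset.sum_le_sum (fun i _ => hg i)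
        _ = (m+1) * K := by simp
    have haH : 0 < a * H := mul_pos ha0 hH0
    have hm2 : (m:ℝ) + 1 < (s:ℝ) := by linarith
    have hm2' : m + 2 ≤ s := by
      have hlt : m + 1 < s := by exact_mod_cast (show ((m+1 : ℕ):ℝ) < (s:ℝ) by push_cast; linarith)
      omega
    have hsKr : (s:ℝ) ≤ ((m:ℝ)+1) * K := by
      calc (s:ℝ) ≤ (((m+1)*K : ℕ):ℝ) := by exact_mod_cast hsK
        _ = ((m:ℝ)+1) * K := by push_cast; ring
    have hBH : B * H ≤ (s:ℝ) := by
      have hdiv : (s:ℝ)/K ≤ (m:ℝ)+1 := by rw [div_le_iff₀ hK0]; linarith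
      have heq : (s:ℝ) - (s:ℝ)/K = (s:ℝ) * (((K:ℝ)-1)/K) := by field_simp
      have h2' : a * H ≤ (s:ℝ) * (((K:ℝ)-1)/K) := by
        calc a * H ≤ (s:ℝ) - ((m:ℝ)+1) := hup
          _ ≤ (s:ℝ) - (s:ℝ)/K := by linarith [hdiv]
          _ = (s:ℝ) * (((K:ℝ)-1)/K) := heq
      have hBa : B * ((K:ℝ) - 1) = a * (K:ℝ) := by
        rw [hBdef, hadef]; field_simp; ring
      have h3' : a * H * (K:ℝ) ≤ (s:ℝ) * ((K:ℝ)-1) := by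
        have := mul_le_mul_of_nonneg_right h2' (le_of_lt hK0)
        calc a * H * (K:ℝ) = a * H * (K:ℝ) := rfl
          _ ≤ (s:ℝ) * (((K:ℝ)-1)/K) * K := by linarith [this]
          _ = (s:ℝ) * ((K:ℝ)-1) := by field_simp
      have h4' : B * H * ((K:ℝ)-1) ≤ (s:ℝ) * ((K:ℝ)-1) := by nlinarith [h3', hBa]
      by_contra hcon
      push_neg at hcon
      nlinarith [h4', hK1]
    exact ⟨hm2', Nat.ceil_le.2 hBH⟩
  -- per-term probability bounds
  set f : ℕ → ℝ≥0∞ := fun m => P (E (m+1) ∩ Good) with hfdef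
  have choose_cast : ∀ nn kk : ℕ, ((nn.choose kk : ℕ) : ℝ≥0∞) ≤ (2:ℝ≥0∞)^nn := by
    intro nn kk
    have h1' : ((nn.choose kk : ℕ) : ℝ≥0∞) ≤ ((2^nn : ℕ) : ℝ≥0∞) :=
      Nat.cast_le.2 (aux_choose_le_two_pow nn kk)
    push_cast at h1'
    exact h1'
  have bound2 : ∀ m : ℕ, f m ≤ ((2:ℝ≥0∞)^K * q)^(m+1) := by
    intro m
    have hsub : E (m+1) ∩ Good ⊆ {ω | m+2 ≤ ∑ i ∈ range ((m+1)*K), ξ i ω} ∩ Good :=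
      fun ω hω => ⟨(detfact m ω hω).1, hω.2⟩
    calc f m ≤ P ({ω | m+2 ≤ ∑ i ∈ range ((m+1)*K), ξ i ω} ∩ Good) := measure_mono hsub
      _ ≤ ((((m+1)*K).choose (m+2) : ℕ) : ℝ≥0∞) * q^(m+2) :=
          aux_tail_bound P ξ hind q hq_i _ _
      _ ≤ (2:ℝ≥0∞)^((m+1)*K) * q^(m+2) := mul_le_mul_left (choose_cast _ _) _
      _ ≤ (2:ℝ≥0∞)^((m+1)*K) * q^(m+1) := by
          have : q^(m+2) ≤ q^(m+1) := by
            calc q^(m+2) = q^(m+1) * q := by rw [pow_succ]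
              _ ≤ q^(m+1) * 1 := mul_le_mul_right hq1 _
              _ = q^(m+1) := mul_one _
          exact mul_le_mul_right this _
      _ = ((2:ℝ≥0∞)^K * q)^(m+1) := by rw [mul_pow, mul_comm (m+1) K, pow_mul]
  have bound1 : ∀ m : ℕ, m + 1 ≤ M → f m ≤ (2:ℝ≥0∞)^(M*K) * q^n := by
    intro m hm
    have hsub : E (m+1) ∩ Good ⊆ {ω | n ≤ ∑ i ∈ range ((m+1)*K), ξ i ω} ∩ Good :=
      fun ω hω => ⟨(detfact m ω hω).2, hω.2⟩
    calc f m ≤ P ({ω | n ≤ ∑ i ∈ range ((m+1)*K), ξ i ω} ∩ Good) := measure_mono hsub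
      _ ≤ ((((m+1)*K).choose n : ℕ) : ℝ≥0∞) * q^n := aux_tail_bound P ξ hind q hq_i _ _
      _ ≤ (2:ℝ≥0∞)^((m+1)*K) * q^n := mul_le_mul_left (choose_cast _ _) _
      _ ≤ (2:ℝ≥0∞)^(M*K) * q^n := by
          refine mul_le_mul_left (pow_le_pow_right' one_le_two ?_) _
          exact Nat.mul_le_mul_right K hm
  -- main chain
  have hmain : P (⋃ m : ℕ, (E (m+1) ∩ Good)) ≤ ∑' m, f m := measure_iUnion_le _
  set T1 : ℝ≥0∞ := (2:ℝ≥0∞)^(M*K) * q^n with hT1def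
  have hsplit : ∑' m, f m ≤ (M : ℝ≥0∞) * T1 + ((2:ℝ≥0∞)^(K+1) * q)^(M+1) := by
    have hpt : ∀ m, f m ≤
        (if m+1 ≤ M then T1 else 0) + (if m+1 ≤ M then 0 else ((2:ℝ≥0∞)^K * q)^(m+1)) := by
      intro m
      by_cases hm : m + 1 ≤ M
      · simp only [hm, if_true]
        rw [add_zero]
        exact bound1 m hm
      · simp only [hm, if_false]
        rw [zero_add]
        exact bound2 m
    have hg1 : ∑' m, (if m+1 ≤ M then T1 else 0) = (M : ℝ≥0∞) * T1 := by
      rw [tsum_eq_sum (s := Finset.range M) (fun m hm => by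
        rw [if_neg]; simp only [Finset.mem_range, not_lt] at hm; omega)]
      rw [Finset.sum_congr rfl (fun m hm => by
        rw [if_pos]; simp only [Finset.mem_range] at hm; omega)]
      rw [Finset.sum_const, Finset.card_range, nsmul_eq_mul]
    have htwoinv : (2:ℝ≥0∞) * 2⁻¹ = 1 := ENNReal.mul_inv_cancel (by norm_num) (by norm_num)
    have hg2 : ∑' m, (if m+1 ≤ M then 0 else ((2:ℝ≥0∞)^K * q)^(m+1))
        ≤ ((2:ℝ≥0∞)^(K+1) * q)^(M+1) := by
      have hpt2 : ∀ m, (if m+1 ≤ M then 0 else ((2:ℝ≥0∞)^K * q)^(m+1))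
          ≤ ((2:ℝ≥0∞)^K * q)^(M+1) * (2:ℝ≥0∞)^M * (2⁻¹:ℝ≥0∞)^m := by
        intro m
        by_cases hm : m + 1 ≤ M
        · simp [hm]
        · rw [if_neg hm]
          push_neg at hm
          have hMm : M ≤ m := by omega
          have hsplitpow : ((2:ℝ≥0∞)^K * q)^(m+1) = ((2:ℝ≥0∞)^K * q)^(M+1) * ((2:ℝ≥0∞)^K * q)^(m-M) := by
            rw [← pow_add]; congr 1; omega
          have hinvpow : (2⁻¹:ℝ≥0∞)^(m-M) = (2:ℝ≥0∞)^M * (2⁻¹:ℝ≥0∞)^m := by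
            have hm' : (2⁻¹:ℝ≥0∞)^m = (2⁻¹)^(m-M) * (2⁻¹)^M := by
              rw [← pow_add]; congr 1; omega
            rw [hm', ← mul_assoc, mul_comm ((2:ℝ≥0∞)^M), mul_assoc]
            rw [show (2:ℝ≥0∞)^M * (2⁻¹:ℝ≥0∞)^M = 1 by
              rw [← mul_pow, htwoinv, one_pow]]
            rw [mul_one]
          calc ((2:ℝ≥0∞)^K * q)^(m+1)
              = ((2:ℝ≥0∞)^K * q)^(M+1) * ((2:ℝ≥0∞)^K * q)^(m-M) := hsplitpow
            _ ≤ ((2:ℝ≥0∞)^K * q)^(M+1) * (2⁻¹:ℝ≥0∞)^(m-M) :=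
                mul_le_mul_right (pow_le_pow_left₀ zero_le hqK _) _
            _ = ((2:ℝ≥0∞)^K * q)^(M+1) * (2:ℝ≥0∞)^M * (2⁻¹:ℝ≥0∞)^m := by
                rw [hinvpow, mul_assoc]
      calc ∑' m, (if m+1 ≤ M then 0 else ((2:ℝ≥0∞)^K * q)^(m+1))
          ≤ ∑' m, ((2:ℝ≥0∞)^K * q)^(M+1) * (2:ℝ≥0∞)^M * (2⁻¹:ℝ≥0∞)^m :=
            ENNReal.tsum_le_tsum hpt2
        _ = ((2:ℝ≥0∞)^K * q)^(M+1) * (2:ℝ≥0∞)^M * ∑' m, (2⁻¹:ℝ≥0∞)^m :=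
            ENNReal.tsum_mul_left
        _ = ((2:ℝ≥0∞)^K * q)^(M+1) * (2:ℝ≥0∞)^M * 2 := by
            rw [ENNReal.tsum_geometric, ENNReal.one_sub_inv_two, inv_inv]
        _ = ((2:ℝ≥0∞)^(K+1) * q)^(M+1) := by
            rw [mul_assoc, ← pow_succ, ← mul_pow]
            congr 1
            rw [pow_succ]
            ring
    calc ∑' m, f m
        ≤ ∑' m, ((if m+1 ≤ M then T1 else 0) + (if m+1 ≤ M then 0 else ((2:ℝ≥0∞)^K * q)^(m+1))) :=
          ENNReal.tsum_le_tsum hpt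
      _ = (∑' m, (if m+1 ≤ M then T1 else 0))
          + ∑' m, (if m+1 ≤ M then 0 else ((2:ℝ≥0∞)^K * q)^(m+1)) := ENNReal.tsum_add
      _ ≤ (M : ℝ≥0∞) * T1 + ((2:ℝ≥0∞)^(K+1) * q)^(M+1) := by
          rw [hg1]; exact add_le_add_right hg2 _
  -- convert to real estimate
  have hNpos : (0:ℝ) < (N:ℝ) := by
    have : (2:ℝ) ≤ (N:ℝ) := by exact_mod_cast hN2
    linarith
  have h2ofReal : ∀ j : ℕ, (2:ℝ≥0∞)^j = ENNReal.ofReal ((2:ℝ)^j) := by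
    intro j
    rw [ENNReal.ofReal_pow (by norm_num)]
    norm_num
  have hfin : (M : ℝ≥0∞) * T1 + ((2:ℝ≥0∞)^(K+1) * q)^(M+1)
      ≤ ENNReal.ofReal ((N:ℝ) ^ (-(B - ε))) := by
    have hx : (M : ℝ≥0∞) * T1 = ENNReal.ofReal ((M:ℝ) * 2^(M*K) * p^n) := by
      rw [hT1def, hqdef, ← ENNReal.ofReal_pow hp0, h2ofReal,
        ← ENNReal.ofReal_mul (by positivity), ← ENNReal.ofReal_natCast M,
        ← ENNReal.ofReal_mul (by positivity), mul_assoc]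
    have hy : ((2:ℝ≥0∞)^(K+1) * q)^(M+1) = ENNReal.ofReal ((2^(K+1) * p)^(M+1)) := by
      rw [hqdef, h2ofReal, ← ENNReal.ofReal_mul (by positivity),
        ← ENNReal.ofReal_pow (by positivity)]
    rw [hx, hy, ← ENNReal.ofReal_add (by positivity) (by positivity)]
    apply ENNReal.ofReal_le_ofReal
    rw [Real.rpow_def_of_pos hNpos]
    calc (M:ℝ) * 2^(M*K) * p^n + (2^(K+1) * p)^(M+1)
        ≤ 1/2 * Real.exp (-(B - ε) * L) + 1/2 * Real.exp (-(B - ε) * L) := add_le_add I1 I2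
      _ = Real.exp (-(B - ε) * L) := by ring
      _ = Real.exp (Real.log (N:ℝ) * (-(B - ε))) := by rw [mul_comm]
  calc P _ ≤ P ((⋃ m : ℕ, (E (m+1) ∩ Good)) ∪ Goodᶜ) := measure_mono step0
    _ ≤ P (⋃ m : ℕ, (E (m+1) ∩ Good)) + P Goodᶜ := measure_union_le _ _
    _ = P (⋃ m : ℕ, (E (m+1) ∩ Good)) := by
        rw [aux_good_ae P ξ hmeas q hq1 (by rw [hqdef]; exact hdist), add_zero]
    _ ≤ ∑' m, f m := hmain
    _ ≤ (M : ℝ≥0∞) * T1 + ((2:ℝ≥0∞)^(K+1) * q)^(M+1) := hsplit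
    _ ≤ ENNReal.ofReal ((N:ℝ) ^ (-(B - ε))) := hfin
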